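/- arXiv:math/0504093 — 3 statements merged into one kernel-verified Lean document; each statement's English description precedes it below -/
import Mathlib

section
/- Let A be a commutative local ring with maximal ideal m. If a formal power series f ∈ A[[t]] has at least one coefficient that is a unit of A (equivalently, f ∉ m[[t]]... i.e., some coefficient lies outside m), then f is not a zero divisor in A[[t]]. Consequently every zero divisor of A[[t]] has all its coefficients in m. -/
/-- Over an Artinian local ring `A`, a formal power series having some unit
coefficient is a non-zerodivisor of `A⟦t⟧`; consequently every zerodivisor of
`A⟦t⟧` has all its coefficients in the maximal ideal. -/
theorem stmt_8 (A : Type*) [CommRing A] [IsLocalRing A] [IsArtinianRing A]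
    (f : PowerSeries A) :
    ((∃ n : ℕ, IsUnit (PowerSeries.coeff n f)) →
      f ∈ nonZeroDivisors (PowerSeries A)) ∧
    (f ∉ nonZeroDivisors (PowerSeries A) →
      ∀ n : ℕ, PowerSeries.coeff n f ∈ IsLocalRing.maximalIdeal A) := by
  have part1 : (∃ n : ℕ, IsUnit (PowerSeries.coeff n f)) → f ∈ nonZeroDivisors (PowerSeries A) := by
    intro h
    classical
    rw [mem_nonZeroDivisors_iff_right]
    intro g hg
    -- hg : g * f = 0, show g = 0
    set n := Nat.find h with hn_def
    have hn : IsUnit (PowerSeries.coeff n f) := Nat.find_spec h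
    have hmin : ∀ i < n, PowerSeries.coeff i f ∈ IsLocalRing.maximalIdeal A := by
      intro i hi
      simpa [IsLocalRing.mem_maximalIdeal, mem_nonunits_iff] using Nat.find_min h hi
    set m := IsLocalRing.maximalIdeal A
    set I : Ideal A := Ideal.span (Set.range fun k => PowerSeries.coeff k g) with hI
    have hmem : ∀ k, PowerSeries.coeff k g ∈ I := fun k =>
      Ideal.subset_span ⟨k, rfl⟩
    have key : ∀ k, PowerSeries.coeff k g ∈ m * I := by
      intro k
      induction k using Nat.strong_induction_on with
      | _ k ih =>
        have h0 : PowerSeries.coeff (k + n) (g * f) = 0 := by rw [hg]; simp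
        rw [PowerSeries.coeff_mul] at h0
        have hsplit : PowerSeries.coeff k g * PowerSeries.coeff n f
            = -∑ p ∈ (Finset.HasAntidiagonal.antidiagonal (k + n)).erase (k, n),
                PowerSeries.coeff p.1 g * PowerSeries.coeff p.2 f := by
          rw [eq_neg_iff_add_eq_zero, ← h0]
          rw [← Finset.add_sum_erase _ _ (by simp : (k, n) ∈ Finset.HasAntidiagonal.antidiagonal (k + n))]
        have hsum : PowerSeries.coeff k g * PowerSeries.coeff n f ∈ m * I := by
          rw [hsplit]
          apply neg_mem
          apply Ideal.sum_mem
          rintro ⟨a, b⟩ hp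
          simp only [Finset.mem_erase, Finset.HasAntidiagonal.mem_antidiagonal] at hp
          obtain ⟨hne, hab⟩ := hp
          rcases lt_trichotomy b n with hb | hb | hb
          · have : PowerSeries.coeff b f ∈ m := hmin b hb
            exact (mul_comm m I) ▸ Ideal.mul_mem_mul (hmem a) this
          · exact absurd (Prod.ext (by omega) hb) hne
          · have ha : a < k := by omega
            exact Ideal.mul_mem_right _ _ (ih a ha)
        have := Ideal.mul_mem_right (↑hn.unit⁻¹) _ hsum
        rwa [mul_assoc, IsUnit.mul_val_inv, mul_one] at this
        -- careful: hn.unit.val = coeff n f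
    have hle : I ≤ m * I := by
      rw [hI, Ideal.span_le]
      rintro x ⟨k, rfl⟩
      exact key k
    obtain ⟨N, hN⟩ := IsArtinianRing.isNilpotent_jacobson_bot (R := A)
    rw [IsLocalRing.jacobson_eq_maximalIdeal ⊥ bot_ne_top] at hN
    have hpow : ∀ j, I ≤ m ^ j * I := by
      intro j
      induction j with
      | zero => simp
      | succ j ih =>
        calc I ≤ m * I := hle
        _ ≤ m * (m ^ j * I) := Ideal.mul_mono_right ih
        _ = m ^ (j + 1) * I := by rw [← mul_assoc, pow_succ, mul_comm (m ^ j) m]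
    have hIbot : I ≤ ⊥ := by
      have := hpow N
      simpa [hN, m] using this
    ext k
    simpa using hIbot (hmem k)
  refine ⟨part1, fun hf n => ?_⟩
  by_contra hmem
  have hu : IsUnit (PowerSeries.coeff n f) := by
    simpa [IsLocalRing.mem_maximalIdeal, mem_nonunits_iff, not_not] using hmem
  exact hf (part1 ⟨n, hu⟩)
end

section
/- Let K be a field of characteristic p > 0 and let x_1, …, x_r ∈ K. Define the Moore determinant Δ(x_1, …, x_r) = det(M) where M_{ij} = x_j^{p^{i−1}} for 1 ≤ i, j ≤ r. Then Δ(x_1, …, x_r) ≠ 0 if and only if x_1, …, x_r are linearly independent over the prime field F_p. -/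
/-- The Moore matrix of `x₁, …, x_r`: its `(i, j)` entry is `x_j ^ (p ^ (i - 1))`. -/
def mooreMatrix {K : Type*} [Field K] (p : ℕ) {r : ℕ} (x : Fin r → K) :
    Matrix (Fin r) (Fin r) K :=
  Matrix.of fun i j => x j ^ p ^ (i : ℕ)

/-- The Moore determinant `Δ(x₁, …, x_r)` is nonzero iff `x₁, …, x_r` are
linearly independent over the prime field `𝔽_p`. -/
theorem stmt_12 (p : ℕ) [Fact p.Prime] (K : Type*) [Field K] [CharP K p]
    (r : ℕ) (x : Fin r → K) :
    (mooreMatrix p x).det ≠ 0 ↔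
      (letI := ZMod.algebra K p; LinearIndependent (ZMod p) x) := by
  letI := ZMod.algebra K p
  have hp : p.Prime := Fact.out
  have hExpLt : ∀ i : Fin r, p ^ (i : ℕ) < p ^ r :=
    fun i => Nat.pow_lt_pow_right hp.one_lt i.isLt
  constructor
  · -- det ≠ 0 → linearly independent
    intro hdet
    rw [Fintype.linearIndependent_iff]
    intro g hg
    by_contra h
    push_neg at h
    obtain ⟨i, hi⟩ := h
    apply hdet
    rw [← Matrix.exists_mulVec_eq_zero_iff]
    refine ⟨fun j => algebraMap (ZMod p) K (g j), ?_, ?_⟩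
    · intro h0
      exact hi ((algebraMap (ZMod p) K).injective (by simpa using congrFun h0 i))
    · funext i'
      have key : ∀ j : Fin r,
          mooreMatrix p x i' j * algebraMap (ZMod p) K (g j) = (g j • x j) ^ p ^ (i' : ℕ) := by
        intro j
        rw [Algebra.smul_def, mul_pow, ← map_pow, ZMod.pow_card_pow]
        simp [mooreMatrix, mul_comm]
      simp only [Matrix.mulVec, dotProduct, key]
      rw [← sum_pow_char_pow, hg, zero_pow (pow_ne_zero _ hp.ne_zero)]
      rfl
  · -- linearly independent → det ≠ 0
    intro hli hdet
    rw [← Matrix.det_transpose, ← Matrix.exists_mulVec_eq_zero_iff] at hdet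
    obtain ⟨v, hv0, hv⟩ := hdet
    obtain ⟨i₀, hi₀⟩ := Function.ne_iff.mp hv0
    -- the associated additive polynomial
    set P : Polynomial K := ∑ i : Fin r, Polynomial.C (v i) * Polynomial.X ^ p ^ (i : ℕ) with hP
    have hcoeff : ∀ i : Fin r, P.coeff (p ^ (i : ℕ)) = v i := by
      intro i
      rw [hP, Polynomial.finset_sum_coeff]
      have : ∀ j : Fin r, (Polynomial.C (v j) * Polynomial.X ^ p ^ (j : ℕ)).coeff (p ^ (i : ℕ))
          = if j = i then v j else 0 := by
        intro j
        rw [Polynomial.coeff_C_mul, Polynomial.coeff_X_pow]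
        have : p ^ (i : ℕ) = p ^ (j : ℕ) ↔ j = i := by
          constructor
          · intro h
            exact Fin.ext (Nat.pow_right_injective hp.two_le h.symm)
          · rintro rfl; rfl
        simp [this]
      simp [this]
    have hPne : P ≠ 0 := fun h => hi₀ (by rw [← hcoeff i₀, h, Polynomial.coeff_zero]; rfl)
    have hPdeg : P.natDegree < p ^ r := by
      have h1 : P.natDegree ≤ p ^ r - 1 := by
        apply Polynomial.natDegree_sum_le_of_forall_le
        intro i _
        calc (Polynomial.C (v i) * Polynomial.X ^ p ^ (i : ℕ)).natDegree
            ≤ p ^ (i : ℕ) := by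
              apply (Polynomial.natDegree_C_mul_le _ _).trans
              simp
          _ ≤ p ^ r - 1 := Nat.le_sub_one_of_lt (hExpLt i)
      exact lt_of_le_of_lt h1 (Nat.sub_lt (Nat.pow_pos hp.pos) one_pos)
    -- the additive polynomial as a ZMod p-linear map
    have hevalL : ∀ y : K, P.eval y = ∑ i : Fin r, v i * y ^ p ^ (i : ℕ) := by
      intro y
      rw [hP, Polynomial.eval_finset_sum]
      simp
    let L : K →ₗ[ZMod p] K :=
      { toFun := fun y => ∑ i : Fin r, v i * y ^ p ^ (i : ℕ)
        map_add' := by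
          intro a b
          rw [← Finset.sum_add_distrib]
          refine Finset.sum_congr rfl fun i _ => ?_
          rw [add_pow_char_pow, mul_add]
        map_smul' := by
          intro c y
          simp only [RingHom.id_apply, Algebra.smul_def, Finset.mul_sum]
          refine Finset.sum_congr rfl fun i _ => ?_
          rw [mul_pow, ← map_pow, ZMod.pow_card_pow]
          ring }
    set V := Submodule.span (ZMod p) (Set.range x) with hV
    have hVker : V ≤ LinearMap.ker L := by
      rw [hV, Submodule.span_le]
      rintro _ ⟨j, rfl⟩
      have := congrFun hv j
      simp only [Matrix.mulVec, dotProduct, Matrix.transpose_apply, mooreMatrix,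
        Matrix.of_apply, Pi.zero_apply] at this
      simp only [SetLike.mem_coe, LinearMap.mem_ker]
      show (∑ i : Fin r, v i * x j ^ p ^ (i : ℕ)) = 0
      rw [← this]
      exact Finset.sum_congr rfl fun i _ => mul_comm _ _
    -- V is finite with p ^ r elements
    let b : Module.Basis (Fin r) (ZMod p) V := Module.Basis.span hli
    haveI : Fintype V := Fintype.ofEquiv (Fin r → ZMod p) b.equivFun.toEquiv.symm
    have hcard : Fintype.card V = p ^ r := by
      rw [Fintype.card_congr b.equivFun.toEquiv]
      simp [ZMod.card]
    have heval : ∀ y : V, P.eval (y : K) = 0 := by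
      intro y
      rw [hevalL]
      exact hVker y.2
    exact hPne (Polynomial.eq_zero_of_natDegree_lt_card_of_eval_eq_zero P Subtype.val_injective
      heval (by rw [hcard]; exact hPdeg))
end

section
/- Let G be a finite group and n a positive integer. For every commutative ring A, the set of group homomorphisms from G to the group L_n(A) of lower unitriangular n×n matrices over A is in natural bijection with the set of ring homomorphisms from the commutative ring k[G,n] (the polynomial k-algebra on variables X_{ij}^g, g ∈ G, 1 ≤ j < i ≤ n, modulo the relations X_{ij}^e = 0 for i ≠ j and X_{ij}^{gh} = ∑_{l} X_{il}^g X_{lj}^h where X_{ii}^g := 1 and X_{ij}^g := 0 for i < j) to A, for A a commutative k-algebra. -/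
open MvPolynomial

/-- Universal property of `k[G,n]`: for a finite group `G` and a commutative
`k`-algebra `A`, `k`-algebra homomorphisms `k[G,n] → A` correspond bijectively to
group homomorphisms `G → L_n(A)` into the lower unitriangular matrices, via
`f ↦ (g ↦ (f(X_{ij}^g)))`. Here `k[G,n]` is presented as the polynomial algebra on
variables `X_{ij}^g` modulo the relations `X_{ii}^g = 1`, `X_{ij}^g = 0` for `i < j`,
`X_{ij}^e = 0` for `i ≠ j`, and `X_{ij}^{gh} = ∑_l X_{il}^g X_{lj}^h`. -/
theorem stmt_16 (k : Type*) [Field k] (G : Type*) [Group G] [Finite G]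
    (n : ℕ) (hn : 0 < n) (A : Type*) [CommRing A] [Algebra k A] :
    let ι := G × Fin n × Fin n
    let P := MvPolynomial ι k
    let I : Ideal P := Ideal.span
      ({q : P | ∃ (g : G) (i : Fin n), q = X (g, i, i) - 1} ∪
       {q : P | ∃ (g : G) (i j : Fin n), i < j ∧ q = X (g, i, j)} ∪
       {q : P | ∃ (i j : Fin n), i ≠ j ∧ q = X ((1 : G), i, j)} ∪
       {q : P | ∃ (g h : G) (i j : Fin n),
          q = X (g * h, i, j) - ∑ l : Fin n, X (g, i, l) * X (h, l, j)})
    let Φ : ((P ⧸ I) →ₐ[k] A) → (G → Matrix (Fin n) (Fin n) A) :=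
      fun f g => Matrix.of fun i j => f (Ideal.Quotient.mk I (X (g, i, j)))
    Set.BijOn Φ Set.univ
      {ρ : G → Matrix (Fin n) (Fin n) A |
        ρ 1 = 1 ∧ (∀ g h : G, ρ (g * h) = ρ g * ρ h) ∧
        ∀ g : G, (∀ i j : Fin n, i < j → ρ g i j = 0) ∧ ∀ i : Fin n, ρ g i i = 1} := by
  intro ι P I Φ
  have hmem : ∀ (q : P), q ∈
      ({q : P | ∃ (g : G) (i : Fin n), q = X (g, i, i) - 1} ∪
       {q : P | ∃ (g : G) (i j : Fin n), i < j ∧ q = X (g, i, j)} ∪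
       {q : P | ∃ (i j : Fin n), i ≠ j ∧ q = X ((1 : G), i, j)} ∪
       {q : P | ∃ (g h : G) (i j : Fin n),
          q = X (g * h, i, j) - ∑ l : Fin n, X (g, i, l) * X (h, l, j)}) → q ∈ I :=
    fun q hq => Ideal.subset_span hq
  -- MapsTo
  have hmaps : Set.MapsTo Φ Set.univ
      {ρ : G → Matrix (Fin n) (Fin n) A |
        ρ 1 = 1 ∧ (∀ g h : G, ρ (g * h) = ρ g * ρ h) ∧
        ∀ g : G, (∀ i j : Fin n, i < j → ρ g i j = 0) ∧ ∀ i : Fin n, ρ g i i = 1} := by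
    intro f _
    set F : P →ₐ[k] A := f.comp (Ideal.Quotient.mkₐ k I) with hF
    have hFval : ∀ (g : G) (i j : Fin n), Φ f g i j = F (X (g, i, j)) := by
      intro g i j; rfl
    have hzero : ∀ (q : P), q ∈ I → F q = 0 := by
      intro q hq
      have : Ideal.Quotient.mk I q = 0 := Ideal.Quotient.eq_zero_iff_mem.mpr hq
      show f (Ideal.Quotient.mk I q) = 0
      rw [this, map_zero]
    have hdiag : ∀ (g : G) (i : Fin n), Φ f g i i = 1 := by
      intro g i
      have h := hzero _ (hmem _ (Or.inl (Or.inl (Or.inl ⟨g, i, rfl⟩))))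
      rw [map_sub, map_one, sub_eq_zero] at h
      rw [hFval, h]
    have htri : ∀ (g : G) (i j : Fin n), i < j → Φ f g i j = 0 := by
      intro g i j hij
      have h := hzero _ (hmem _ (Or.inl (Or.inl (Or.inr ⟨g, i, j, hij, rfl⟩))))
      rw [hFval, h]
    refine ⟨?_, ?_, fun g => ⟨htri g, hdiag g⟩⟩
    · ext i j
      by_cases hij : i = j
      · subst hij
        rw [hdiag, Matrix.one_apply_eq]
      · have h := hzero _ (hmem _ (Or.inl (Or.inr ⟨i, j, hij, rfl⟩)))
        rw [Matrix.one_apply_ne hij, hFval, h]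
    · intro g h
      ext i j
      have hz := hzero _ (hmem _ (Or.inr ⟨g, h, i, j, rfl⟩))
      rw [map_sub, map_sum, sub_eq_zero] at hz
      simp only [map_mul] at hz
      rw [Matrix.mul_apply, hFval, hz]
      exact Finset.sum_congr rfl fun l _ => by rw [hFval, hFval]
  refine ⟨hmaps, ?_, ?_⟩
  · -- injective
    intro f _ f' _ hff'
    have hX : ∀ v : ι, f (Ideal.Quotient.mk I (X v)) = f' (Ideal.Quotient.mk I (X v)) := by
      rintro ⟨g, i, j⟩
      have h1 := congrFun hff' g
      have h2 := congrFun (congrFun h1 i) j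
      exact h2
    have hcomp : f.comp (Ideal.Quotient.mkₐ k I) = f'.comp (Ideal.Quotient.mkₐ k I) := by
      apply MvPolynomial.algHom_ext
      intro v
      exact hX v
    ext x
    obtain ⟨p, rfl⟩ := Ideal.Quotient.mk_surjective x
    exact congrArg (fun φ => φ p) hcomp
  · -- surjective
    rintro ρ ⟨h1, hmul, hlt⟩
    set φ0 : P →ₐ[k] A := MvPolynomial.aeval (fun v : ι => ρ v.1 v.2.1 v.2.2) with hφ0
    have hρX : ∀ (g : G) (i j : Fin n), φ0 (X (g, i, j)) = ρ g i j := by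
      intro g i j; rw [hφ0, aeval_X]
    have hker : ∀ q ∈ I, φ0 q = 0 := by
      intro q hq
      refine Submodule.span_induction ?_ (map_zero φ0) (fun a b _ _ ha hb => by
        rw [map_add, ha, hb, add_zero]) (fun a b _ hb => by
        rw [smul_eq_mul, map_mul, hb, mul_zero]) hq
      rintro q (((⟨g, i, rfl⟩ | ⟨g, i, j, hij, rfl⟩) | ⟨i, j, hij, rfl⟩) | ⟨g, h, i, j, rfl⟩)
      · rw [map_sub, map_one, hρX, (hlt g).2 i, sub_self]
      · rw [hρX, (hlt g).1 i j hij]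
      · rw [hρX, h1, Matrix.one_apply_ne hij]
      · rw [map_sub, map_sum, hρX, hmul g h, Matrix.mul_apply, sub_eq_zero]
        exact Finset.sum_congr rfl fun l _ => by rw [map_mul, hρX, hρX]
    refine ⟨Ideal.Quotient.liftₐ I φ0 hker, Set.mem_univ _, ?_⟩
    funext g
    ext i j
    show Ideal.Quotient.liftₐ I φ0 hker (Ideal.Quotient.mk I (X (g, i, j))) = ρ g i j
    rw [Ideal.Quotient.liftₐ_apply]
    exact hρX g i j
end
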